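/- The function f̃₁(x) := ((3x − 2)/(x − 2)) · (1 − 2/x)^x is strictly increasing in the real variable x on (3, ∞) (in fact on (2, ∞) restricted to x ≥ 3), with f̃₁(3) = 7/27. In particular, f̃₁(x) ≥ 7/27 > 1/4 for all real x ≥ 3. -/

import Mathlib

lemma log_lt_half_sub_inv {u : ℝ} (hu : 1 < u) : Real.log u < (u - u⁻¹) / 2 := by
  have h0 : (0:ℝ) < u := lt_trans one_pos hu
  set F : ℝ → ℝ := fun t => (t - t⁻¹) / 2 - Real.log t with hF
  have mono : StrictMonoOn F (Set.Ici 1) := by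
    apply strictMonoOn_of_deriv_pos (convex_Ici 1)
    · have hs : Set.Ici (1:ℝ) ⊆ {0}ᶜ := by intro t ht; simp at ht ⊢; intro h; linarith
      exact ((continuous_id.continuousOn.sub (continuousOn_inv₀.mono hs)).div_const 2).sub
        (Real.continuousOn_log.mono hs)
    · intro t ht
      rw [interior_Ici] at ht
      have ht0 : (0:ℝ) < t := lt_trans one_pos ht
      have hd : HasDerivAt F ((1 - -(t^2)⁻¹)/2 - t⁻¹) t := by
        exact (((hasDerivAt_id t).sub (hasDerivAt_inv ht0.ne')).div_const 2).sub
          (Real.hasDerivAt_log ht0.ne')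
      rw [hd.deriv]
      rw [show (1 - -(t^2)⁻¹)/2 - t⁻¹ = (t-1)^2/(2*t^2) by field_simp; ring]
      have h1t : 0 < t - 1 := sub_pos.mpr ht
      positivity
  have h1 : F 1 < F u := mono (by simp) (by simp [hu.le]) hu
  simp [hF, Real.log_one] at h1
  linarith

/-- The function `f̃₁(x) = ((3x-2)/(x-2)) (1 - 2/x)^x` (with real exponent, i.e.
`(1-2/x)^x = exp(x ln(1-2/x))`). -/
noncomputable def fTilde (x : ℝ) : ℝ := ((3 * x - 2) / (x - 2)) * Real.exp (x * Real.log (1 - 2 / x))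

lemma fTilde_hasDerivAt {x : ℝ} (hx : 2 < x) :
    HasDerivAt fTilde
      (Real.exp (x * Real.log (1 - 2/x)) *
        (-4/(x-2)^2 + (3*x-2)/(x-2) * (Real.log (1 - 2/x) + 2/(x-2)))) x := by
  have hx0 : (0:ℝ) < x := by linarith
  have hx2 : (0:ℝ) < x - 2 := by linarith
  have hfrac : 0 < 1 - 2/x := by
    rw [sub_pos, div_lt_one hx0]; linarith
  have h1 : HasDerivAt (fun y : ℝ => (3*y-2)/(y-2))
      ((3*1*(x-2) - (3*x-2)*1)/(x-2)^2) x :=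
    (((hasDerivAt_id x).const_mul 3).sub_const 2).div ((hasDerivAt_id x).sub_const 2) hx2.ne'
  have h2 : HasDerivAt (fun y : ℝ => 1 - 2/y) (0 - (0*x - 2*1)/x^2) x :=
    (hasDerivAt_const x 1).sub ((hasDerivAt_const x 2).div (hasDerivAt_id x) hx0.ne')
  have h3 := h2.log hfrac.ne'
  have h4 := (hasDerivAt_id x).mul h3
  have h5 := h4.exp
  have h6 := h1.mul h5
  have hne : (1:ℝ) - 2/x ≠ 0 := hfrac.ne'
  convert h6 using 1
  · rfl
  · rfl
  · rfl
  · simp only [Pi.mul_apply, id]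
    field_simp
    ring

/-- `f̃₁` is strictly increasing on `[3, ∞)`, with `f̃₁(3) = 7/27`; in particular,
`f̃₁(x) ≥ 7/27 > 1/4` for all real `x ≥ 3`. -/
theorem fTilde_properties :
    StrictMonoOn fTilde (Set.Ici 3) ∧
    fTilde 3 = 7 / 27 ∧
    (∀ x : ℝ, 3 ≤ x → 7 / 27 ≤ fTilde x) ∧
    (1 : ℝ) / 4 < 7 / 27 := by
  have hmono : StrictMonoOn fTilde (Set.Ici 3) := by
    apply strictMonoOn_of_deriv_pos (convex_Ici 3)
    · exact fun x hx => (fTilde_hasDerivAt (by simp at hx; linarith)).continuousAt.continuousWithinAt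
    · intro x hx
      rw [interior_Ici] at hx
      have hx3 : (3:ℝ) < x := hx
      have hx2 : (0:ℝ) < x - 2 := by linarith
      have hx0 : (0:ℝ) < x := by linarith
      rw [(fTilde_hasDerivAt (by linarith)).deriv]
      apply mul_pos (Real.exp_pos _)
      -- key log bound
      have hu : 1 < x/(x-2) := (one_lt_div hx2).mpr (by linarith)
      have key := log_lt_half_sub_inv hu
      have hinv : (x/(x-2))⁻¹ = 1 - 2/x := by
        rw [inv_div]; field_simp
      have hlog : Real.log (1 - 2/x) = - Real.log (x/(x-2)) := by
        rw [← hinv, Real.log_inv]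
      rw [hinv] at key
      have hL : -((x/(x-2) - (1 - 2/x))/2) < Real.log (1 - 2/x) := by
        rw [hlog]; linarith
      have hq : 0 < (3*x-2)/(x-2) := div_pos (by linarith) hx2
      have hstep : (3*x-2)/(x-2) * (-((x/(x-2) - (1 - 2/x))/2) + 2/(x-2)) <
          (3*x-2)/(x-2) * (Real.log (1 - 2/x) + 2/(x-2)) := by
        apply mul_lt_mul_of_pos_left _ hq
        linarith
      have heq : -4/(x-2)^2 + (3*x-2)/(x-2) * (-((x/(x-2) - (1 - 2/x))/2) + 2/(x-2))
          = 2/(x*(x-2)) := by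
        field_simp
        ring
      have hpos : 0 < 2/(x*(x-2)) := by positivity
      linarith
  have h3 : fTilde 3 = 7/27 := by
    unfold fTilde
    rw [show (1:ℝ) - 2/3 = 1/3 by norm_num]
    rw [show (3:ℝ) * Real.log (1/3) = Real.log (1/27) by
      rw [show (1/27:ℝ) = (1/3)^(3:ℕ) by norm_num, Real.log_pow]; push_cast; ring]
    rw [Real.exp_log (by norm_num)]
    norm_num
  refine ⟨hmono, h3, ?_, by norm_num⟩
  intro x hx
  rcases eq_or_lt_of_le hx with h | h
  · rw [← h, h3]
  · rw [← h3]
    exact le_of_lt (hmono (by simp) (by simp; linarith) h)
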